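/- Let T ≥ 1, β ∈ (0,1), δ = 2^{-3T-3}, and suppose E ⊆ [0,1] satisfies H^β_∞(E) ≥ 1 − δ. If β is sufficiently close to 1 (so that 1 − 2^{-3T-3} > 2^{-Tβ}(2^T − 1/2)), then every dyadic interval Q of generation T satisfies H^β_∞(E ∩ Q) ≥ (1/2)·l(Q)^β = (1/2)·2^{-Tβ}. -/

import Mathlib

open MeasureTheory Set ENNReal

/-- The dyadic interval `[k 2^{-j}, (k+1) 2^{-j}]`. -/
def dyadicInterval (j k : ℕ) : Set ℝ :=
  Icc ((k : ℝ) / 2 ^ j) (((k : ℝ) + 1) / 2 ^ j)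

/-- β-dimensional Hausdorff content defined via countable covers by dyadic intervals. -/
noncomputable def dyadicHausdorffContent (β : ℝ) (S : Set ℝ) : ℝ≥0∞ :=
  ⨅ (c : ℕ → ℕ × ℕ) (_ : ∀ i, (c i).2 < 2 ^ (c i).1)
    (_ : S ⊆ ⋃ i, dyadicInterval (c i).1 (c i).2),
    ∑' i, (ENNReal.ofReal ((2 : ℝ) ^ (-((c i).1 : ℝ)))) ^ β

lemma exists_dyadic (T : ℕ) {x : ℝ} (hx : x ∈ Icc (0:ℝ) 1) :
    ∃ i : ℕ, i < 2 ^ T ∧ x ∈ dyadicInterval T i := by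
  obtain ⟨hx0, hx1⟩ := hx
  have hpow : (0:ℝ) < 2 ^ T := by positivity
  rcases lt_or_eq_of_le hx1 with h1 | h1
  · have h0 : (0:ℤ) ≤ ⌊x * 2 ^ T⌋ := Int.floor_nonneg.mpr (mul_nonneg hx0 hpow.le)
    set i : ℕ := (⌊x * 2 ^ T⌋).toNat with hi
    have hcast : ((i : ℕ) : ℝ) = ((⌊x * 2 ^ T⌋ : ℤ) : ℝ) := by
      rw [hi]; exact_mod_cast Int.toNat_of_nonneg h0
    have hle : (i : ℝ) ≤ x * 2 ^ T := by rw [hcast]; exact Int.floor_le _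
    have hlt : x * 2 ^ T < (i : ℝ) + 1 := by rw [hcast]; exact Int.lt_floor_add_one _
    refine ⟨i, ?_, ?_, ?_⟩
    · have : (i : ℝ) < (2:ℝ) ^ T := lt_of_le_of_lt hle (by nlinarith)
      exact_mod_cast this
    · rw [div_le_iff₀ hpow]; exact hle
    · rw [le_div_iff₀ hpow]; exact hlt.le
  · subst h1
    refine ⟨2 ^ T - 1, Nat.sub_lt (by positivity) one_pos, ?_, ?_⟩
    all_goals
      have hc : ((2 ^ T - 1 : ℕ) : ℝ) = 2 ^ T - 1 := by
        push_cast [Nat.cast_sub (Nat.one_le_two_pow)]; ring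
      rw [hc]
    · rw [div_le_one hpow]; linarith
    · rw [le_div_iff₀ hpow]; linarith

set_option maxHeartbeats 1000000 in
theorem stmt15 (T : ℕ) (hT : 1 ≤ T) (β : ℝ) (hβ : β ∈ Ioo (0 : ℝ) 1)
    (E : Set ℝ) (hE : E ⊆ Icc (0 : ℝ) 1)
    (hcontent : ENNReal.ofReal (1 - (2 : ℝ) ^ (-(3 * (T : ℝ)) - 3)) ≤
      dyadicHausdorffContent β E)
    (hclose : (2 : ℝ) ^ (-(T : ℝ) * β) * ((2 : ℝ) ^ (T : ℕ) - 1 / 2) <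
      1 - (2 : ℝ) ^ (-(3 * (T : ℝ)) - 3)) :
    ∀ k : ℕ, k < 2 ^ T →
      ENNReal.ofReal ((1 / 2) * (2 : ℝ) ^ (-(T : ℝ) * β)) ≤
        dyadicHausdorffContent β (E ∩ dyadicInterval T k) := by
  intro k hk
  by_contra hcon
  push_neg at hcon
  -- extract a near optimal cover c of E ∩ Q_k
  rw [dyadicHausdorffContent, iInf_lt_iff] at hcon
  obtain ⟨c, hcon⟩ := hcon
  rw [iInf_lt_iff] at hcon
  obtain ⟨hc1, hcon⟩ := hcon
  rw [iInf_lt_iff] at hcon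
  obtain ⟨hc2, hS⟩ := hcon
  set f : ℕ × ℕ → ℝ≥0∞ := fun p => (ENNReal.ofReal ((2 : ℝ) ^ (-(p.1 : ℝ)))) ^ β with hf
  set r : ℝ := (2 : ℝ) ^ (-(T : ℝ) * β) with hr
  have hrpos : 0 < r := Real.rpow_pos_of_pos two_pos _
  have ht : f (T, k) = ENNReal.ofReal r := by
    rw [hf, hr]
    simp only
    rw [ENNReal.ofReal_rpow_of_pos (Real.rpow_pos_of_pos two_pos _),
      ← Real.rpow_mul (by norm_num : (0:ℝ) ≤ 2)]
  -- the combined cover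
  set N := 2 ^ T with hN
  set c' : ℕ → ℕ × ℕ := fun i =>
    if i < N then (if i = k then c 0 else (T, i)) else c (i - N + 1) with hc'
  have hvalid : ∀ i, (c' i).2 < 2 ^ (c' i).1 := by
    intro i
    rw [hc']
    by_cases h1 : i < N
    · by_cases h2 : i = k
      · simp [h1, h2, hk, hc1 0]
      · simp [h1, h2, h1]; exact h1
    · simp [h1, hc1 _]
  have hcover : E ⊆ ⋃ i, dyadicInterval (c' i).1 (c' i).2 := by
    intro x hx
    obtain ⟨i, hiN, hxi⟩ := exists_dyadic T (hE hx)
    by_cases h2 : i = k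
    · subst h2
      have hxEQ : x ∈ E ∩ dyadicInterval T i := ⟨hx, hxi⟩
      obtain ⟨s, hs⟩ := mem_iUnion.mp (hc2 hxEQ)
      rcases Nat.eq_zero_or_pos s with h0 | hpos
      · subst h0
        refine mem_iUnion.mpr ⟨i, ?_⟩
        simp only [hc', if_pos (show i < N from hiN), if_pos rfl, ↓reduceIte]
        exact hs
      · refine mem_iUnion.mpr ⟨s - 1 + N, ?_⟩
        have h3 : ¬ (s - 1 + N < N) := by omega
        have h4 : s - 1 + N - N + 1 = s := by omega
        simp only [hc', if_neg h3, h4]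
        exact hs
    · refine mem_iUnion.mpr ⟨i, ?_⟩
      simp only [hc', if_pos (show i < N from hiN), if_neg h2]
      exact hxi
  have hupper : dyadicHausdorffContent β E ≤ ∑' i, f (c' i) := by
    rw [dyadicHausdorffContent]
    exact iInf_le_of_le c' (iInf_le_of_le hvalid (iInf_le _ hcover))
  -- compute the sum
  have hsum : ∑' i, f (c' i) =
      ((N - 1 : ℕ) : ℝ≥0∞) * ENNReal.ofReal r + ∑' n, f (c n) := by
    rw [← Summable.sum_add_tsum_nat_add' (f := fun i => f (c' i)) (k := N) ENNReal.summable]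
    have h1 : ∀ n : ℕ, f (c' (n + N)) = f (c (n + 1)) := by
      intro n
      have h3 : ¬ (n + N < N) := by omega
      have h4 : n + N - N + 1 = n + 1 := by omega
      simp only [hc', if_neg h3, h4]
    have h2 : ∑ i ∈ Finset.range N, f (c' i) =
        f (c 0) + ((N - 1 : ℕ) : ℝ≥0∞) * ENNReal.ofReal r := by
      have hmem : k ∈ Finset.range N := Finset.mem_range.mpr hk
      have h5 : ∑ i ∈ (Finset.range N).erase k, f (c' i) =
          ((N - 1 : ℕ) : ℝ≥0∞) * ENNReal.ofReal r := by
        have h6 : ∀ i ∈ (Finset.range N).erase k, f (c' i) = ENNReal.ofReal r := by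
          intro i hi
          have hi1 : i ∈ Finset.range N := Finset.mem_of_mem_erase hi
          have hi2 : i ≠ k := Finset.ne_of_mem_erase hi
          simp only [hc', if_pos (Finset.mem_range.mp hi1), if_neg hi2]
          exact ht
        rw [Finset.sum_congr rfl h6, Finset.sum_const,
          Finset.card_erase_of_mem hmem, Finset.card_range, nsmul_eq_mul]
      rw [← Finset.add_sum_erase _ _ hmem, h5]
      congr 1
      simp [hc', hk]
    rw [h2]
    rw [tsum_congr h1]
    rw [tsum_eq_zero_add' (f := fun n => f (c n)) ENNReal.summable]
    ring
  have hShalf : ∑' n, f (c n) < ENNReal.ofReal ((1/2) * r) := hS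
  have hfin : ((N - 1 : ℕ) : ℝ≥0∞) * ENNReal.ofReal r ≠ ⊤ := by
    exact ENNReal.mul_ne_top (ENNReal.natCast_ne_top _) ENNReal.ofReal_ne_top
  have hlt2 : ∑' i, f (c' i) < ENNReal.ofReal (r * ((2:ℝ) ^ T - 1/2)) := by
    rw [hsum]
    calc ((N - 1 : ℕ) : ℝ≥0∞) * ENNReal.ofReal r + ∑' n, f (c n)
        < ((N - 1 : ℕ) : ℝ≥0∞) * ENNReal.ofReal r + ENNReal.ofReal ((1/2) * r) :=
          ENNReal.add_lt_add_left hfin hShalf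
      _ = ENNReal.ofReal (((N - 1 : ℕ) : ℝ) * r + (1/2) * r) := by
          rw [← ENNReal.ofReal_natCast (N - 1), ← ENNReal.ofReal_mul (by positivity),
            ← ENNReal.ofReal_add (by positivity) (by positivity)]
      _ = ENNReal.ofReal (r * ((2:ℝ) ^ T - 1/2)) := by
          congr 1
          have : ((N - 1 : ℕ) : ℝ) = (2:ℝ) ^ T - 1 := by
            rw [hN]
            push_cast [Nat.cast_sub (Nat.one_le_two_pow)]; ring
          rw [this]; ring
  have hfinal : dyadicHausdorffContent β E < dyadicHausdorffContent β E := by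
    calc dyadicHausdorffContent β E ≤ ∑' i, f (c' i) := hupper
      _ < ENNReal.ofReal (r * ((2:ℝ) ^ T - 1/2)) := hlt2
      _ < ENNReal.ofReal (1 - (2 : ℝ) ^ (-(3 * (T : ℝ)) - 3)) := by
          have h2T : (1:ℝ) ≤ 2 ^ T := one_le_pow₀ (by norm_num)
          exact (ENNReal.ofReal_lt_ofReal_iff_of_nonneg
            (mul_nonneg hrpos.le (by linarith))).mpr hclose
      _ ≤ dyadicHausdorffContent β E := hcontent
  exact lt_irrefl _ hfinal
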